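/- For every v in GF(2^{nk}), Tr^{nk}_k(B_n(v) + Z_n(v)) = 0, where Tr^{nk}_k denotes the trace from GF(2^{nk}) to GF(2^k), B_n is defined by the recursion B_1 = B_2 = 1, B_{i+2}(x) = B_{i+1}(x) + x^{2^{ik}} B_i(x), and Z_n(x) = B_{n+1}(x) + x B_{n-1}(x)^{2^k}. -/

import Mathlib

open Finset

/-- The polynomials `B_i` from the paper. -/
def B {F : Type*} [Field F] (k : ℕ) (x : F) : ℕ → F
  | 0 => 1
  | 1 => 1
  | 2 => 1
  | i + 3 => B k x (i + 2) + x ^ (2 ^ ((i + 1) * k)) * B k x (i + 1)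

/-- `Z_n(x) = B_{n+1}(x) + x * B_{n-1}(x)^{2^k}`. -/
def Z {F : Type*} [Field F] (n k : ℕ) (x : F) : F :=
  B k x (n + 1) + x * (B k x (n - 1)) ^ (2 ^ k)

theorem stmt6 (n k : ℕ) (hn : 2 ≤ n) (hk : 1 ≤ k)
    (F : Type*) [Field F] [Fintype F] (hF : Fintype.card F = 2 ^ (n * k)) :
    ∀ v : F, ∑ i ∈ Finset.range n, (B k v n + Z n k v) ^ (2 ^ (i * k)) = 0 := by
  -- characteristic 2
  haveI : CharP F (ringChar F) := ringChar.charP F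
  have hp : (ringChar F).Prime := CharP.char_is_prime F _
  have hdvd : ringChar F ∣ 2 ^ (n * k) := by
    rw [← hF]
    exact (CharP.cast_eq_zero_iff F (ringChar F) (Fintype.card F)).mp
      (FiniteField.cast_card_eq_zero F)
  have hchar : ringChar F = 2 :=
    (Nat.prime_dvd_prime_iff_eq hp Nat.prime_two).mp (hp.dvd_of_dvd_pow hdvd)
  haveI hC2 : CharP F 2 := hchar ▸ ringChar.charP F
  haveI : Fact (Nat.Prime 2) := ⟨Nat.prime_two⟩
  intro v
  obtain ⟨m, rfl⟩ : ∃ m, n = m + 2 := ⟨n - 2, by omega⟩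
  obtain ⟨t, ht⟩ : ∃ t : F, t = v ^ 2 ^ ((m + 1) * k) * B k v (m + 1) := ⟨_, rfl⟩
  have hpc : ∀ a : F, a ^ 2 ^ ((m + 2) * k) = a := by
    intro a
    rw [← hF]
    exact FiniteField.pow_card a
  -- the summand equals t + t ^ 2 ^ k
  have hsummand : B k v (m + 2) + Z (m + 2) k v = t + t ^ 2 ^ k := by
    have hrec : B k v (m + 3) = B k v (m + 2) + v ^ 2 ^ ((m + 1) * k) * B k v (m + 1) := rfl
    have htk : t ^ 2 ^ k = v * (B k v (m + 1)) ^ 2 ^ k := by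
      rw [ht, mul_pow, ← pow_mul, ← pow_add]
      have : (m + 1) * k + k = (m + 2) * k := by ring
      rw [this, hpc]
    rw [Z, htk]
    show B k v (m + 2) + (B k v (m + 3) + v * B k v (m + 2 - 1) ^ 2 ^ k) = _
    have : m + 2 - 1 = m + 1 := rfl
    rw [this, hrec, ht]
    have h2 : B k v (m + 2) + B k v (m + 2) = 0 := CharTwo.add_self_eq_zero _
    have hv : v * B k v (m + 1) ^ 2 ^ k = t ^ 2 ^ k := htk.symm
    linear_combination h2
  rw [hsummand]
  have hexpand : ∀ i : ℕ, (t + t ^ 2 ^ k) ^ 2 ^ (i * k)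
      = t ^ 2 ^ (i * k) + t ^ 2 ^ ((i + 1) * k) := by
    intro i
    rw [add_pow_char_pow, ← pow_mul, ← pow_add]
    congr 2
    ring
  simp only [hexpand]
  rw [Finset.sum_add_distrib]
  have hshift : ∑ i ∈ Finset.range (m + 2), t ^ 2 ^ ((i + 1) * k)
      = ∑ i ∈ Finset.range (m + 2), t ^ 2 ^ (i * k) := by
    have h1 := Finset.sum_range_succ' (fun i => t ^ 2 ^ (i * k)) (m + 2)
    have h2 := Finset.sum_range_succ (fun i => t ^ 2 ^ (i * k)) (m + 2)
    try simp only at h1 h2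
    have hlast : t ^ 2 ^ ((m + 2) * k) = t := hpc t
    have hfirst : t ^ 2 ^ (0 * k) = t := by simp
    rw [h2, hlast] at h1
    rw [hfirst] at h1
    exact add_right_cancel h1.symm
  rw [hshift]
  exact CharTwo.add_self_eq_zero _
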